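/- Let r ≥ 1 and let R = {v ∈ ℤ² : 0 < d₁(v, 0) ≤ r}, where d₁((i₁,j₁),(i₂,j₂)) = |i₁−i₂| + |j₁−j₂|. Then for every q ≥ 2, the supremum of R_q(X) over all R-recoverable systems X on ℤ² over alphabets of size q equals 1 − 1/D₁(r), where D₁(r) = (r+1)²/2 if r is odd and D₁(r) = r²/2 + r + 1 if r is even. -/

import Mathlib

set_option linter.unusedSectionVars false
set_option linter.unusedTactic false
set_option linter.unusedVariables false
set_option maxHeartbeats 1000000

open Filter


/-- An `R`-recoverable system on `ℤ²`: every symbol `x_v` is a function of the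
symbols in positions `v + R`. -/
def IsRecoverable2 {Q : Type*} (R : Set (ℤ × ℤ)) (X : Set (ℤ × ℤ → Q)) : Prop :=
  ∀ v : ℤ × ℤ, ∃ f : (ℤ × ℤ → Q) → Q,
    (∀ x y : ℤ × ℤ → Q, (∀ u ∈ R, x (v + u) = y (v + u)) → f x = f y) ∧
    ∀ x ∈ X, f x = x v

/-- `|B_{[n]²}(X)|`: restrictions of elements of `X` to `{0,…,n−1}²`. -/
noncomputable def blockCount2 {Q : Type*} (X : Set (ℤ × ℤ → Q)) (n : ℕ) : ℕ :=
  Nat.card ↥((fun x : ℤ × ℤ → Q =>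
    fun p : Fin n × Fin n => x (((p.1 : ℕ) : ℤ), ((p.2 : ℕ) : ℤ))) '' X)

/-- The rate `R_q(X) = limsup_{n→∞} (1/n²) log_q |B_{[n]²}(X)|`. -/
noncomputable def rate2 (q : ℕ) {Q : Type*} (X : Set (ℤ × ℤ → Q)) : ℝ :=
  Filter.limsup (fun n : ℕ => Real.logb q (blockCount2 X n) / ((n : ℝ) ^ 2)) Filter.atTop

/-- The maximum size of an anticode of diameter `r` in the `l₁` metric on `ℤ²`. -/
noncomputable def D1 (r : ℕ) : ℝ :=
  if r % 2 = 1 then ((r : ℝ) + 1) ^ 2 / 2 else (r : ℝ) ^ 2 / 2 + (r : ℝ) + 1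



lemma ediv_bracket (a M : ℤ) (hM : 0 < M) : M * (a / M) ≤ a ∧ a < M * (a / M) + M := by
  constructor
  · have := Int.ediv_mul_le a hM.ne'
    linarith [this, mul_comm (a / M) M]
  · have := Int.lt_ediv_add_one_mul_self a hM
    linarith [mul_comm (a / M + 1) M]

lemma count1d (M t lo hi : ℤ) (hM : 0 < M) (h : lo ≤ hi) :
    hi - lo - M < (((Finset.Ico lo hi).filter (fun x => M ∣ x - t)).card : ℤ) * M ∧
    (((Finset.Ico lo hi).filter (fun x => M ∣ x - t)).card : ℤ) * M < hi - lo + M := by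
  classical
  obtain ⟨hlo1, hlo2⟩ := ediv_bracket (t - lo) M hM
  obtain ⟨hhi1, hhi2⟩ := ediv_bracket (t - hi) M hM
  set y0 : ℤ := -((t - lo) / M) with hy0
  set y1 : ℤ := -((t - hi) / M) with hy1
  have hset : (Finset.Ico lo hi).filter (fun x => M ∣ x - t)
      = (Finset.Ico y0 y1).image (fun y => t + M * y) := by
    ext x
    simp only [Finset.mem_filter, Finset.mem_Ico, Finset.mem_image]
    constructor
    · rintro ⟨⟨h1, h2⟩, c, hc⟩
      refine ⟨c, ⟨?_, ?_⟩, by linarith⟩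
      · -- lo ≤ t + M c, want y0 ≤ c
        by_contra hcon
        push_neg at hcon
        have : c ≤ y0 - 1 := by omega
        have : M * c ≤ M * (y0 - 1) := by
          exact mul_le_mul_of_nonneg_left this hM.le
        have hxc : x = t + M * c := by linarith
        nlinarith
      · by_contra hcon
        push_neg at hcon
        have : M * y1 ≤ M * c := mul_le_mul_of_nonneg_left hcon hM.le
        nlinarith
    · rintro ⟨c, ⟨h1, h2⟩, rfl⟩
      refine ⟨⟨?_, ?_⟩, c, by ring⟩
      · have : M * y0 ≤ M * c := mul_le_mul_of_nonneg_left h1 hM.le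
        nlinarith
      · have : M * (c + 1) ≤ M * y1 := mul_le_mul_of_nonneg_left (by omega) hM.le
        nlinarith
  have hinj : Set.InjOn (fun y => t + M * y) (Finset.Ico y0 y1) := by
    intro u hu v hv huv
    simp only at huv
    have : M * u = M * v := by linarith
    exact mul_left_cancel₀ hM.ne' this
  have hcard : ((Finset.Ico lo hi).filter (fun x => M ∣ x - t)).card = (y1 - y0).toNat := by
    rw [hset, Finset.card_image_of_injOn hinj, Int.card_Ico]
  rw [hcard]
  rcases le_or_gt y1 y0 with hle | hlt
  · have : (y1 - y0).toNat = 0 := by omega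
    rw [this]
    have : M * y1 ≤ M * y0 := mul_le_mul_of_nonneg_left hle hM.le
    constructor
    · push_cast; nlinarith
    · push_cast; nlinarith
  · have : ((y1 - y0).toNat : ℤ) = y1 - y0 := by omega
    rw [this]
    constructor
    · nlinarith
    · nlinarith


noncomputable def latF (a c b lo hi : ℤ) : Finset (ℤ × ℤ) := by
  classical
  exact ((Finset.Ico lo hi) ×ˢ (Finset.Ico lo hi)).filter
    (fun v => c ∣ v.2 - 0 ∧ a ∣ v.1 - b * v.2)

lemma latF_card (a c b lo hi : ℤ) :
    (latF a c b lo hi).card =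
      ∑ y ∈ (Finset.Ico lo hi).filter (fun y => c ∣ y - 0),
        ((Finset.Ico lo hi).filter (fun x => a ∣ x - b * y)).card := by
  classical
  have hset : latF a c b lo hi
      = ((Finset.Ico lo hi).filter (fun y => c ∣ y - 0)).biUnion
        (fun y => ((Finset.Ico lo hi).filter (fun x => a ∣ x - b * y)).image (fun x => (x, y))) := by
    ext ⟨x, y⟩
    simp only [latF, Finset.mem_filter, Finset.mem_product, Finset.mem_biUnion, Finset.mem_image]
    aesop
  rw [hset, Finset.card_biUnion]
  · refine Finset.sum_congr rfl fun y _ => ?_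
    have hinj : Function.Injective (fun x : ℤ => ((x, y) : ℤ × ℤ)) :=
      fun u v huv => congrArg Prod.fst huv
    rw [Finset.card_image_of_injective _ hinj]
  · intro u hu v hv huv
    simp only [Finset.disjoint_left, Finset.mem_image]
    rintro p ⟨x, hx, rfl⟩ ⟨x', hx', hp⟩
    have : v = u := congrArg Prod.snd hp
    exact huv this.symm

lemma latF_card_low (a c b lo hi : ℤ) (ha : 0 < a) (hc : 0 < c)
    (hla : a ≤ hi - lo) (hlc : c ≤ hi - lo) :
    (hi - lo - c) * (hi - lo - a) < ((latF a c b lo hi).card : ℤ) * (a * c) := by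
  classical
  have hlohi : lo ≤ hi := by linarith
  set K := ((Finset.Ico lo hi).filter (fun y => c ∣ y - 0)).card with hK
  have hKb := count1d c 0 lo hi hc hlohi
  have hterm : ∀ y ∈ (Finset.Ico lo hi).filter (fun y => c ∣ y - 0),
      hi - lo - a + 1 ≤ (((Finset.Ico lo hi).filter (fun x => a ∣ x - b * y)).card : ℤ) * a := by
    intro y _
    have := (count1d a (b * y) lo hi ha hlohi).1
    linarith
  have hsum : (K : ℤ) * (hi - lo - a + 1) ≤ ((latF a c b lo hi).card : ℤ) * a := by
    rw [latF_card]
    push_cast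
    rw [Finset.sum_mul]
    calc (K : ℤ) * (hi - lo - a + 1)
        = ∑ _y ∈ (Finset.Ico lo hi).filter (fun y => c ∣ y - 0), (hi - lo - a + 1) := by
          rw [Finset.sum_const, nsmul_eq_mul]
      _ ≤ _ := Finset.sum_le_sum hterm
  have h1 : hi - lo - c + 1 ≤ (K : ℤ) * c := by linarith [hKb.1]
  have hpos : (0:ℤ) < hi - lo - a + 1 := by linarith
  have step1 : (K : ℤ) * (hi - lo - a + 1) * c ≤ ((latF a c b lo hi).card : ℤ) * a * c :=
    mul_le_mul_of_nonneg_right hsum hc.le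
  have step2 : (hi - lo - c + 1) * (hi - lo - a + 1) ≤ (K : ℤ) * c * (hi - lo - a + 1) :=
    mul_le_mul_of_nonneg_right h1 hpos.le
  nlinarith [step1, step2]

lemma latF_card_high (a c b lo hi : ℤ) (ha : 0 < a) (hc : 0 < c) (hlohi : lo ≤ hi) :
    ((latF a c b lo hi).card : ℤ) * (a * c) < (hi - lo + c) * (hi - lo + a) := by
  classical
  set K := ((Finset.Ico lo hi).filter (fun y => c ∣ y - 0)).card with hK
  have hKb := count1d c 0 lo hi hc hlohi
  have hterm : ∀ y ∈ (Finset.Ico lo hi).filter (fun y => c ∣ y - 0),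
      (((Finset.Ico lo hi).filter (fun x => a ∣ x - b * y)).card : ℤ) * a ≤ hi - lo + a - 1 := by
    intro y _
    linarith [(count1d a (b * y) lo hi ha hlohi).2]
  have hsum : ((latF a c b lo hi).card : ℤ) * a ≤ (K : ℤ) * (hi - lo + a - 1) := by
    rw [latF_card]
    push_cast
    rw [Finset.sum_mul]
    calc ∑ y ∈ (Finset.Ico lo hi).filter (fun y => c ∣ y - 0),
          (((Finset.Ico lo hi).filter (fun x => a ∣ x - b * y)).card : ℤ) * a
        ≤ ∑ _y ∈ (Finset.Ico lo hi).filter (fun y => c ∣ y - 0), (hi - lo + a - 1) :=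
          Finset.sum_le_sum hterm
      _ = (K : ℤ) * (hi - lo + a - 1) := by rw [Finset.sum_const, nsmul_eq_mul]
  have hKc : (K : ℤ) * c ≤ hi - lo + c - 1 := by linarith [hKb.2]
  have hKnn : (0 : ℤ) ≤ K := Int.natCast_nonneg K
  have hcardnn : (0 : ℤ) ≤ ((latF a c b lo hi).card : ℤ) := Int.natCast_nonneg _
  have hlenpos : (0:ℤ) < hi - lo + a := by linarith
  rcases le_or_gt ((K:ℤ)) 0 with hK0 | hK0
  · have : (K:ℤ) = 0 := le_antisymm hK0 hKnn
    have hc0 : ((latF a c b lo hi).card : ℤ) * a ≤ 0 := by rw [this] at hsum; linarith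
    have : ((latF a c b lo hi).card : ℤ) = 0 := by nlinarith
    rw [this]
    nlinarith
  · have step1 : ((latF a c b lo hi).card : ℤ) * a * c ≤ (K : ℤ) * (hi - lo + a - 1) * c :=
      mul_le_mul_of_nonneg_right hsum hc.le
    have hstep2 : (K : ℤ) * (hi - lo + a - 1) * c = (K : ℤ) * c * (hi - lo + a - 1) := by ring
    have step3 : (K : ℤ) * c * (hi - lo + a - 1) ≤ (hi - lo + c - 1) * (hi - lo + a - 1) := by
      apply mul_le_mul_of_nonneg_right hKc
      nlinarith
    nlinarith [step1, step3]


section Upper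
variable {Q : Type} [Fintype Q]

/-- Generic upper bound on the block count of a recoverable system. -/
lemma blockCount_le_pow (r q : ℕ) (hr : 1 ≤ r) (hq : Fintype.card Q = q)
    (a c b : ℤ) (ha : 0 < a) (hc : 0 < c)
    (hmin : ∀ v : ℤ × ℤ, c ∣ v.2 → a ∣ v.1 - b * v.2 → v ≠ 0 → (r : ℤ) < |v.1| + |v.2|)
    (X : Set (ℤ × ℤ → Q))
    (hX : IsRecoverable2 {v : ℤ × ℤ | v ≠ 0 ∧ |v.1| + |v.2| ≤ (r : ℤ)} X)
    (n : ℕ) (hn : 2 * r ≤ n) :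
    blockCount2 X n ≤ q ^ (n * n - (latF a c b r ((n : ℤ) - r)).card) := by
  classical
  set L := latF a c b r ((n : ℤ) - r) with hL
  -- Sn : positions of the block corresponding to lattice points
  set Sn : Finset (Fin n × Fin n) :=
    Finset.univ.filter (fun p => (((p.1 : ℕ) : ℤ), ((p.2 : ℕ) : ℤ)) ∈ L) with hSn
  have hScard : Sn.card = L.card := by
    apply Finset.card_bij (fun p _ => (((p.1 : ℕ) : ℤ), ((p.2 : ℕ) : ℤ)))
    · intro p hp; exact (Finset.mem_filter.mp hp).2
    · intro p hp p' hp' h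
      have h1 : ((p.1 : ℕ) : ℤ) = ((p'.1 : ℕ) : ℤ) := congrArg Prod.fst h
      have h2 : ((p.2 : ℕ) : ℤ) = ((p'.2 : ℕ) : ℤ) := congrArg Prod.snd h
      have : (p.1 : ℕ) = (p'.1 : ℕ) := by exact_mod_cast h1
      have h2' : (p.2 : ℕ) = (p'.2 : ℕ) := by exact_mod_cast h2
      ext
      · exact this
      · exact h2'
    · intro v hv
      have hv' := hv
      rw [hL, latF, Finset.mem_filter, Finset.mem_product, Finset.mem_Ico, Finset.mem_Ico] at hv'
      obtain ⟨⟨⟨h1, h2⟩, h3, h4⟩, -⟩ := hv'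
      have hn1 : 0 ≤ v.1 ∧ v.1 < n := by omega
      have hn2 : 0 ≤ v.2 ∧ v.2 < n := by omega
      refine ⟨(⟨v.1.toNat, by omega⟩, ⟨v.2.toNat, by omega⟩), ?_, ?_⟩
      · rw [hSn, Finset.mem_filter]
        constructor
        · exact Finset.mem_univ _
        · simpa [Int.toNat_of_nonneg hn1.1, Int.toNat_of_nonneg hn2.1] using hv
      · simp [Int.toNat_of_nonneg hn1.1, Int.toNat_of_nonneg hn2.1]
  -- restriction to the complement of Sn is injective on the block set
  set res : (ℤ × ℤ → Q) → (Fin n × Fin n → Q) :=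
    (fun x : ℤ × ℤ → Q => fun p : Fin n × Fin n => x (((p.1 : ℕ) : ℤ), ((p.2 : ℕ) : ℤ))) with hres
  set Φ : (Fin n × Fin n → Q) → ({p : Fin n × Fin n // p ∉ Sn} → Q) :=
    (fun g => fun p => g p.1) with hΦ
  have hinj : Set.InjOn Φ (res '' X) := by
    rintro g1 ⟨x, hx, rfl⟩ g2 ⟨y, hy, rfl⟩ hg
    funext p
    by_cases hp : p ∈ Sn
    · -- p is a recoverable position
      have hpL : ((((p.1 : ℕ) : ℤ)), (((p.2 : ℕ) : ℤ))) ∈ L := (Finset.mem_filter.mp hp).2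
      set v : ℤ × ℤ := ((((p.1 : ℕ) : ℤ)), (((p.2 : ℕ) : ℤ))) with hv
      have hvbox : (r : ℤ) ≤ v.1 ∧ v.1 < (n : ℤ) - r ∧ (r : ℤ) ≤ v.2 ∧ v.2 < (n : ℤ) - r ∧
          c ∣ v.2 ∧ a ∣ v.1 - b * v.2 := by
        have := hpL
        rw [hL, latF, Finset.mem_filter, Finset.mem_product, Finset.mem_Ico, Finset.mem_Ico] at this
        obtain ⟨⟨⟨h1, h2⟩, h3, h4⟩, h5, h6⟩ := this
        exact ⟨h1, h2, h3, h4, by simpa using h5, h6⟩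
      obtain ⟨f, hloc, hev⟩ := hX v
      have hagree : ∀ u ∈ {u : ℤ × ℤ | u ≠ 0 ∧ |u.1| + |u.2| ≤ (r : ℤ)}, x (v + u) = y (v + u) := by
        intro u hu
        obtain ⟨hu0, hur⟩ := hu
        have habs1 : |u.1| ≤ (r : ℤ) := by
          have := abs_nonneg u.2; linarith
        have habs2 : |u.2| ≤ (r : ℤ) := by
          have := abs_nonneg u.1; linarith
        have hb1 : 0 ≤ v.1 + u.1 ∧ v.1 + u.1 < n := by
          rcases abs_le.mp habs1 with ⟨hh1, hh2⟩
          omega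
        have hb2 : 0 ≤ v.2 + u.2 ∧ v.2 + u.2 < n := by
          rcases abs_le.mp habs2 with ⟨hh1, hh2⟩
          omega
        -- the position v + u is not in Sn
        set pw : Fin n × Fin n := (⟨(v.1 + u.1).toNat, by omega⟩, ⟨(v.2 + u.2).toNat, by omega⟩)
          with hpw
        have hcoord : ((((pw.1 : ℕ) : ℤ)), (((pw.2 : ℕ) : ℤ))) = v + u := by
          have e1 : ((pw.1 : ℕ) : ℤ) = v.1 + u.1 := Int.toNat_of_nonneg hb1.1
          have e2 : ((pw.2 : ℕ) : ℤ) = v.2 + u.2 := Int.toNat_of_nonneg hb2.1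
          rw [Prod.ext_iff]
          exact ⟨e1, e2⟩
        have hpwS : pw ∉ Sn := by
          rw [hSn, Finset.mem_filter]
          rintro ⟨-, hmem⟩
          rw [hcoord] at hmem
          rw [hL, latF, Finset.mem_filter] at hmem
          obtain ⟨-, hd1, hd2⟩ := hmem
          have hc2 : c ∣ u.2 := by
            have : c ∣ (v.2 + u.2) - 0 - v.2 := dvd_sub hd1 (by simpa using hvbox.2.2.2.2.1)
            simpa using this
          have ha2 : a ∣ u.1 - b * u.2 := by
            have : a ∣ ((v.1 + u.1) - b * (v.2 + u.2)) - (v.1 - b * v.2) := by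
              exact dvd_sub (by simpa using hd2) hvbox.2.2.2.2.2
            have h' : ((v.1 + u.1) - b * (v.2 + u.2)) - (v.1 - b * v.2) = u.1 - b * u.2 := by ring
            rwa [h'] at this
          have := hmin u hc2 ha2 hu0
          linarith
        have hthis := congrFun hg ⟨pw, hpwS⟩
        simp only [hΦ, hres] at hthis
        rw [hcoord] at hthis
        exact hthis
      have h1 : x v = f x := (hev x hx).symm
      have h2 : f x = f y := hloc x y hagree
      have h3 : f y = y v := hev y hy
      show x v = y v
      rw [h1, h2, h3]
    · exact congrFun hg ⟨p, hp⟩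
  -- cardinality chase
  have hcard1 : blockCount2 X n = Nat.card ↥(res '' X) := rfl
  have hcard2 : Nat.card ↥(res '' X) = Nat.card ↥(Φ '' (res '' X)) :=
    (Nat.card_image_of_injOn hinj).symm
  have hcard3 : Nat.card ↥(Φ '' (res '' X)) ≤ Fintype.card ({p : Fin n × Fin n // p ∉ Sn} → Q) := by
    rw [← Nat.card_eq_fintype_card]
    have h1 : Nat.card ↥(Φ '' (res '' X)) ≤ Nat.card ↥(Set.univ : Set ({p : Fin n × Fin n // p ∉ Sn} → Q)) :=
      Nat.card_mono (Set.toFinite _) (Set.subset_univ _)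
    rwa [Nat.card_univ] at h1
  have hcard4 : Fintype.card ({p : Fin n × Fin n // p ∉ Sn} → Q) = q ^ (n * n - Sn.card) := by
    rw [Fintype.card_fun, hq]
    congr 1
    have : Fintype.card {p : Fin n × Fin n // p ∉ Sn} =
        Fintype.card (Fin n × Fin n) - Fintype.card {p : Fin n × Fin n // p ∈ Sn} :=
      Fintype.card_subtype_compl _
    rw [this, Fintype.card_prod, Fintype.card_fin]
    have : Fintype.card {p : Fin n × Fin n // p ∈ Sn} = Sn.card := Fintype.card_coe Sn
    rw [this]
  rw [hcard1, hcard2, ← hScard]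
  exact hcard3.trans_eq hcard4
end Upper


def Lpred (a c b : ℤ) (v : ℤ × ℤ) : Prop := c ∣ v.2 ∧ a ∣ v.1 - b * v.2

instance (a c b : ℤ) (v : ℤ × ℤ) : Decidable (Lpred a c b v) := by
  unfold Lpred; infer_instance

lemma Lpred_sub {a c b : ℤ} {v w : ℤ × ℤ} (hv : Lpred a c b v) (hw : Lpred a c b w) :
    Lpred a c b (v - w) := by
  obtain ⟨h1, h2⟩ := hv
  obtain ⟨h3, h4⟩ := hw
  refine ⟨dvd_sub h1 h3, ?_⟩
  have : (v - w).1 - b * (v - w).2 = (v.1 - b * v.2) - (w.1 - b * w.2) := by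
    simp [Prod.fst_sub, Prod.snd_sub]; ring
  rw [this]
  exact dvd_sub h2 h4

/-- The achievability system: one linear constraint per lattice point. -/
def Xach (q : ℕ) (a c b : ℤ) (Af : Finset (ℤ × ℤ)) : Set (ℤ × ℤ → ZMod q) :=
  {x | ∀ v : ℤ × ℤ, Lpred a c b v → ∑ u ∈ Af, x (v + u) = 0}

section Ach
variable (q r : ℕ) (a c b : ℤ) (Af : Finset (ℤ × ℤ))
variable (h0 : (0, 0) ∈ Af)
variable (hdiam : ∀ u ∈ Af, ∀ u' ∈ Af, |u.1 - u'.1| + |u.2 - u'.2| ≤ (r : ℤ))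
variable (hT2 : ∀ u ∈ Af, Lpred a c b u → u = (0, 0))
variable (hcov : ∀ w : ℤ × ℤ, ∃ u ∈ Af, Lpred a c b (w - u))

include h0 hdiam hT2 hcov in
lemma Xach_recoverable :
    IsRecoverable2 {v : ℤ × ℤ | v ≠ 0 ∧ |v.1| + |v.2| ≤ (r : ℤ)} (Xach q a c b Af) := by
  intro w
  obtain ⟨u0, hu0, hLv⟩ := hcov w
  refine ⟨fun x => -∑ u ∈ Af.erase u0, x ((w - u0) + u), ?_, ?_⟩
  · intro x y hagree
    have : ∀ u ∈ Af.erase u0, x ((w - u0) + u) = y ((w - u0) + u) := by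
      intro u hu
      obtain ⟨hne, huA⟩ := Finset.mem_erase.mp hu
      have harg : (w - u0) + u = w + (u - u0) := by ring
      have hmem : (u - u0) ∈ {v : ℤ × ℤ | v ≠ 0 ∧ |v.1| + |v.2| ≤ (r : ℤ)} := by
        refine ⟨sub_ne_zero.mpr hne, ?_⟩
        simpa [Prod.fst_sub, Prod.snd_sub] using hdiam u huA u0 hu0
      rw [harg]
      exact hagree (u - u0) hmem
    simp only [neg_inj]
    exact Finset.sum_congr rfl this
  · intro x hx
    have hconstr := hx (w - u0) hLv
    have hsplit : ∑ u ∈ Af.erase u0, x ((w - u0) + u) + x ((w - u0) + u0) = ∑ u ∈ Af, x ((w - u0) + u) :=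
      Finset.sum_erase_add Af _ hu0
    have harg : (w - u0) + u0 = w := by ring
    rw [harg] at hsplit
    rw [hconstr] at hsplit
    exact (eq_neg_of_add_eq_zero_right hsplit).symm

/-- The extension operator: fill in lattice points from the free positions. -/
def ext2 (q : ℕ) (a c b : ℤ) (Af : Finset (ℤ × ℤ)) (y : ℤ × ℤ → ZMod q) : ℤ × ℤ → ZMod q :=
  fun w => if Lpred a c b w then -∑ u ∈ Af.erase (0, 0), y (w + u) else y w

include h0 hT2 in
lemma ext2_mem (y : ℤ × ℤ → ZMod q) : ext2 q a c b Af y ∈ Xach q a c b Af := by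
  intro v hv
  have hother : ∀ u ∈ Af.erase (0, 0), ext2 q a c b Af y (v + u) = y (v + u) := by
    intro u hu
    obtain ⟨hne, huA⟩ := Finset.mem_erase.mp hu
    have : ¬ Lpred a c b (v + u) := by
      intro hL
      have : Lpred a c b u := by
        have := Lpred_sub hL hv
        simpa using this
      exact hne (hT2 u huA this)
    simp [ext2, this]
  have hsplit : ∑ u ∈ Af.erase (0, 0), ext2 q a c b Af y (v + u) + ext2 q a c b Af y (v + (0, 0)) =
      ∑ u ∈ Af, ext2 q a c b Af y (v + u) := Finset.sum_erase_add Af _ h0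
  have hv0 : v + ((0 : ℤ), (0 : ℤ)) = v := by simp
  have hcenter : ext2 q a c b Af y (v + (0, 0)) = -∑ u ∈ Af.erase (0, 0), y (v + u) := by
    rw [hv0]; simp [ext2, hv]
  rw [← hsplit, hcenter, Finset.sum_congr rfl hother]
  abel

lemma ext2_free (y : ℤ × ℤ → ZMod q) (w : ℤ × ℤ) (hw : ¬ Lpred a c b w) :
    ext2 q a c b Af y w = y w := by simp [ext2, hw]

include h0 hT2 in
lemma blockCount_ge_pow [NeZero q] (n : ℕ) :
    q ^ (n * n - (Finset.univ.filter
        (fun p : Fin n × Fin n => Lpred a c b (((p.1 : ℕ) : ℤ), ((p.2 : ℕ) : ℤ)))).card)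
      ≤ blockCount2 (Xach q a c b Af) n := by
  classical
  set Tn : Finset (Fin n × Fin n) :=
    Finset.univ.filter (fun p => Lpred a c b (((p.1 : ℕ) : ℤ), ((p.2 : ℕ) : ℤ))) with hTn
  set res : (ℤ × ℤ → ZMod q) → (Fin n × Fin n → ZMod q) :=
    (fun x => fun p : Fin n × Fin n => x (((p.1 : ℕ) : ℤ), ((p.2 : ℕ) : ℤ))) with hres
  -- the "free data" function built from z
  set yz : ({p : Fin n × Fin n // p ∉ Tn} → ZMod q) → (ℤ × ℤ → ZMod q) :=
    fun z w =>
      if h : 0 ≤ w.1 ∧ w.1 < n ∧ 0 ≤ w.2 ∧ w.2 < n ∧ ¬ Lpred a c b w then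
        z ⟨(⟨w.1.toNat, by omega⟩, ⟨w.2.toNat, by omega⟩), by
          rw [hTn, Finset.mem_filter]
          rintro ⟨-, hmem⟩
          simp only [Int.toNat_of_nonneg h.1, Int.toNat_of_nonneg h.2.2.1] at hmem
          exact h.2.2.2.2 (by simpa using hmem)⟩
      else 0 with hyz
  have hyz_eval : ∀ (z : {p : Fin n × Fin n // p ∉ Tn} → ZMod q) (p : {p : Fin n × Fin n // p ∉ Tn}),
      yz z (((p.1.1 : ℕ) : ℤ), ((p.1.2 : ℕ) : ℤ)) = z p := by
    intro z p
    have hnL : ¬ Lpred a c b (((p.1.1 : ℕ) : ℤ), ((p.1.2 : ℕ) : ℤ)) := by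
      intro hL
      exact p.2 (Finset.mem_filter.mpr ⟨Finset.mem_univ _, hL⟩)
    have hcond : (0 : ℤ) ≤ ((p.1.1 : ℕ) : ℤ) ∧ ((p.1.1 : ℕ) : ℤ) < n ∧
        (0 : ℤ) ≤ ((p.1.2 : ℕ) : ℤ) ∧ ((p.1.2 : ℕ) : ℤ) < n ∧
        ¬ Lpred a c b (((p.1.1 : ℕ) : ℤ), ((p.1.2 : ℕ) : ℤ)) := by
      refine ⟨by positivity, ?_, by positivity, ?_, hnL⟩
      · show ((p.1.1 : ℕ) : ℤ) < (n : ℤ)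
        exact_mod_cast p.1.1.2
      · show ((p.1.2 : ℕ) : ℤ) < (n : ℤ)
        exact_mod_cast p.1.2.2
    rw [hyz]
    simp only [dif_pos hcond]
    congr 1
  set J : ({p : Fin n × Fin n // p ∉ Tn} → ZMod q) → ↥(res '' Xach q a c b Af) :=
    fun z => ⟨res (ext2 q a c b Af (yz z)),
      Set.mem_image_of_mem res (ext2_mem q a c b Af h0 hT2 (yz z))⟩ with hJ
  have hJinj : Function.Injective J := by
    intro z z' hzz
    funext p
    have hval := congrFun (congrArg Subtype.val hzz) p.1
    simp only [hJ, hres] at hval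
    have hnL : ¬ Lpred a c b (((p.1.1 : ℕ) : ℤ), ((p.1.2 : ℕ) : ℤ)) := by
      intro hL
      exact p.2 (Finset.mem_filter.mpr ⟨Finset.mem_univ _, hL⟩)
    rw [ext2_free q a c b Af _ _ hnL, ext2_free q a c b Af _ _ hnL] at hval
    rw [hyz_eval z p, hyz_eval z' p] at hval
    exact hval
  have hle : Nat.card ({p : Fin n × Fin n // p ∉ Tn} → ZMod q)
      ≤ Nat.card ↥(res '' Xach q a c b Af) :=
    Nat.card_le_card_of_injective J hJinj
  have hdom : Nat.card ({p : Fin n × Fin n // p ∉ Tn} → ZMod q) = q ^ (n * n - Tn.card) := by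
    rw [Nat.card_eq_fintype_card, Fintype.card_fun, ZMod.card]
    congr 1
    have h1 : Fintype.card {p : Fin n × Fin n // p ∉ Tn} =
        Fintype.card (Fin n × Fin n) - Fintype.card {p : Fin n × Fin n // p ∈ Tn} :=
      Fintype.card_subtype_compl _
    rw [h1, Fintype.card_prod, Fintype.card_fin, Fintype.card_coe]
  rw [← hdom]
  exact hle

include h0 hT2 in
lemma Tn_card_eq (n : ℕ) :
    (Finset.univ.filter
        (fun p : Fin n × Fin n => Lpred a c b (((p.1 : ℕ) : ℤ), ((p.2 : ℕ) : ℤ)))).card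
      = (latF a c b 0 n).card := by
  classical
  apply Finset.card_bij (fun p _ => ((((p.1 : ℕ) : ℤ)), (((p.2 : ℕ) : ℤ))))
  · intro p hp
    have := (Finset.mem_filter.mp hp).2
    rw [latF, Finset.mem_filter, Finset.mem_product, Finset.mem_Ico, Finset.mem_Ico]
    refine ⟨⟨⟨by positivity, ?_⟩, by positivity, ?_⟩, by simpa using this.1, this.2⟩
    · show ((p.1 : ℕ) : ℤ) < (n : ℤ)
      exact_mod_cast p.1.2
    · show ((p.2 : ℕ) : ℤ) < (n : ℤ)
      exact_mod_cast p.2.2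
  · intro p hp p' hp' h
    have h1' : ((p.1 : ℕ) : ℤ) = ((p'.1 : ℕ) : ℤ) := congrArg Prod.fst h
    have h2' : ((p.2 : ℕ) : ℤ) = ((p'.2 : ℕ) : ℤ) := congrArg Prod.snd h
    have h1 : (p.1 : ℕ) = (p'.1 : ℕ) := by exact_mod_cast h1'
    have h2 : (p.2 : ℕ) = (p'.2 : ℕ) := by exact_mod_cast h2' 
    ext
    · exact h1
    · exact h2
  · intro v hv
    rw [latF, Finset.mem_filter, Finset.mem_product, Finset.mem_Ico, Finset.mem_Ico] at hv
    obtain ⟨⟨⟨h1, h2⟩, h3, h4⟩, h5, h6⟩ := hv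
    refine ⟨(⟨v.1.toNat, by omega⟩, ⟨v.2.toNat, by omega⟩), ?_, ?_⟩
    · rw [Finset.mem_filter]
      refine ⟨Finset.mem_univ _, ?_⟩
      simp only [Int.toNat_of_nonneg h1, Int.toNat_of_nonneg h3]
      exact ⟨by simpa using h5, h6⟩
    · simp only [Int.toNat_of_nonneg h1, Int.toNat_of_nonneg h3]
end Ach


section Odd
variable (k : ℤ) (hk : 1 ≤ k)

/-- Odd-case anticode: rotated square `0 ≤ x+y < 2k`, `0 ≤ x−y < 2k`. -/
noncomputable def AfOdd (k : ℤ) : Finset (ℤ × ℤ) := by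
  classical
  exact ((Finset.Icc 0 (2 * k - 1)) ×ˢ (Finset.Icc (-k) k)).filter
    (fun u => 0 ≤ u.1 + u.2 ∧ u.1 + u.2 < 2 * k ∧ 0 ≤ u.1 - u.2 ∧ u.1 - u.2 < 2 * k)

lemma mem_AfOdd {k : ℤ} (u : ℤ × ℤ) :
    u ∈ AfOdd k ↔ 0 ≤ u.1 + u.2 ∧ u.1 + u.2 < 2 * k ∧ 0 ≤ u.1 - u.2 ∧ u.1 - u.2 < 2 * k := by
  rw [AfOdd, Finset.mem_filter, Finset.mem_product, Finset.mem_Icc, Finset.mem_Icc]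
  constructor
  · rintro ⟨-, h⟩; exact h
  · rintro ⟨h1, h2, h3, h4⟩
    exact ⟨⟨by omega, by omega⟩, h1, h2, h3, h4⟩

include hk in
lemma AfOdd_zero : ((0 : ℤ), (0 : ℤ)) ∈ AfOdd k := by
  rw [mem_AfOdd]; omega

include hk in
lemma AfOdd_diam : ∀ u ∈ AfOdd k, ∀ u' ∈ AfOdd k,
    |u.1 - u'.1| + |u.2 - u'.2| ≤ 2 * k - 1 := by
  intro u hu u' hu'
  rw [mem_AfOdd] at hu hu'
  rw [Int.abs_eq_natAbs, Int.abs_eq_natAbs]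
  omega

include hk in
lemma odd_min (v : ℤ × ℤ) (h1 : k ∣ v.2) (h2 : 2 * k ∣ v.1 - 1 * v.2) (h0 : v ≠ 0) :
    2 * k - 1 < |v.1| + |v.2| := by
  obtain ⟨m, hm⟩ := h1
  obtain ⟨l, hl⟩ := h2
  by_contra hcon
  push_neg at hcon
  have hv1 : v.1 = k * m + 2 * k * l := by linarith
  have hne : ¬(v.1 = 0 ∧ v.2 = 0) := by
    intro ⟨ha, hb⟩; exact h0 (Prod.ext ha hb)
  -- |m| ≤ 1
  have hm1 : |m| ≤ 1 := by
    by_contra hm2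
    push_neg at hm2
    have : 2 ≤ |m| := by omega
    have : 2 * k ≤ k * |m| := by nlinarith
    have habs : |v.2| = k * |m| := by rw [hm, abs_mul, abs_of_nonneg (by omega : (0:ℤ) ≤ k)]
    have := abs_nonneg v.1
    linarith
  rw [abs_le] at hm1
  obtain ⟨hm1a, hm1b⟩ := hm1
  have hkpos : (0:ℤ) < k := by omega
  have hle1 := le_abs_self v.1
  have hle2 := neg_abs_le v.1
  interval_cases m
  · -- m = -1 : v.2 = -k
    have hv2 : |v.2| = k := by
      rw [hm, show k * (-1 : ℤ) = -k by ring, abs_neg, abs_of_nonneg hkpos.le]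
    obtain ⟨hb1, hb2⟩ := abs_le.mp (show |v.1| ≤ k - 1 by linarith)
    rcases le_or_gt l 0 with hl0 | hl0
    · have : 2 * k * l ≤ 0 := by
        apply mul_nonpos_of_nonneg_of_nonpos (by omega) hl0
      linarith
    · have : 2 * k ≤ 2 * k * l := by nlinarith
      linarith
  · -- m = 0 : v.2 = 0
    have hv2 : v.2 = 0 := by rw [hm]; ring
    have habs2 : |v.2| = 0 := by rw [hv2, abs_zero]
    have hl0 : l ≠ 0 := by
      rintro rfl
      exact hne ⟨by linarith, hv2⟩
    rcases lt_or_gt_of_ne hl0 with h' | h'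
    · have : 2 * k * l ≤ 2 * k * (-1) := by nlinarith
      linarith
    · have : 2 * k * 1 ≤ 2 * k * l := by nlinarith
      linarith
  · -- m = 1 : v.2 = k
    have hv2 : |v.2| = k := by
      rw [hm, show k * (1 : ℤ) = k by ring, abs_of_nonneg hkpos.le]
    obtain ⟨hb1, hb2⟩ := abs_le.mp (show |v.1| ≤ k - 1 by linarith)
    rcases le_or_gt l 0 with hl0 | hl0
    · have : 2 * k * l ≤ 0 := mul_nonpos_of_nonneg_of_nonpos (by omega) hl0
      rcases eq_or_lt_of_le hl0 with rfl | hl0'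
      · linarith [hv1]
      · have : 2 * k * l ≤ 2 * k * (-1) := by nlinarith
        linarith
    · have : 2 * k * 1 ≤ 2 * k * l := by nlinarith
      linarith

include hk in
lemma AfOdd_T2 : ∀ u ∈ AfOdd k, Lpred (2 * k) k 1 u → u = (0, 0) := by
  intro u hu hL
  rw [mem_AfOdd] at hu
  obtain ⟨hc, ha⟩ := hL
  obtain ⟨e, he⟩ := ha
  have he' : u.1 - u.2 = 2 * k * e := by linarith
  have he0 : e = 0 := by
    by_contra h
    rcases lt_or_gt_of_ne h with h' | h'
    · nlinarith [hu.2.2.1]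
    · nlinarith [hu.2.2.2]
  have h12 : u.1 = u.2 := by
    rw [he0, mul_zero] at he'
    omega
  obtain ⟨f, hf⟩ := hc
  have hf0 : f = 0 := by
    by_contra h
    rcases lt_or_gt_of_ne h with h' | h'
    · nlinarith [hu.1, hu.2.1]
    · nlinarith [hu.1, hu.2.1]
  have : u.2 = 0 := by rw [hf, hf0, mul_zero]
  have : u.1 = 0 := by omega
  exact Prod.ext this ‹u.2 = 0›

include hk in
lemma AfOdd_cov : ∀ w : ℤ × ℤ, ∃ u ∈ AfOdd k, Lpred (2 * k) k 1 (w - u) := by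
  intro w
  set α := (w.1 + w.2) / (2 * k) with hα
  set β := (w.1 - w.2) / (2 * k) with hβ
  have h2k : (0:ℤ) < 2 * k := by omega
  have hp := Int.emod_nonneg (w.1 + w.2) h2k.ne'
  have hp' := Int.emod_lt_of_pos (w.1 + w.2) h2k
  have hq := Int.emod_nonneg (w.1 - w.2) h2k.ne'
  have hq' := Int.emod_lt_of_pos (w.1 - w.2) h2k
  have hdm1 := Int.mul_ediv_add_emod (w.1 + w.2) (2 * k)
  have hdm2 := Int.mul_ediv_add_emod (w.1 - w.2) (2 * k)
  rw [← hα] at hdm1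
  rw [← hβ] at hdm2
  have e1 : (w.1 - k * (α + β)) + (w.2 - k * (α - β)) = (w.1 + w.2) - 2 * (k * α) := by ring
  have e2 : (w.1 - k * (α + β)) - (w.2 - k * (α - β)) = (w.1 - w.2) - 2 * (k * β) := by ring
  have hdm1' : 2 * (k * α) + (w.1 + w.2) % (2 * k) = w.1 + w.2 := by linarith [hdm1]
  have hdm2' : 2 * (k * β) + (w.1 - w.2) % (2 * k) = w.1 - w.2 := by linarith [hdm2]
  refine ⟨(w.1 - k * (α + β), w.2 - k * (α - β)), ?_, ?_, ?_⟩
  · rw [mem_AfOdd]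
    dsimp only
    refine ⟨by linarith, by linarith, by linarith, by linarith⟩
  · refine ⟨α - β, ?_⟩
    show w.2 - (w.2 - k * (α - β)) = k * (α - β)
    ring
  · refine ⟨β, ?_⟩
    show (w.1 - (w.1 - k * (α + β))) - 1 * (w.2 - (w.2 - k * (α - β))) = 2 * k * β
    ring
end Odd


section Even

/-- Even-case anticode: the `l₁`-ball of radius `s`. -/
noncomputable def AfEven (s : ℕ) : Finset (ℤ × ℤ) := by
  classical
  exact ((Finset.Icc (-(s:ℤ)) s) ×ˢ (Finset.Icc (-(s:ℤ)) s)).filter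
    (fun u => u.1.natAbs + u.2.natAbs ≤ s)

lemma mem_AfEven {s : ℕ} (u : ℤ × ℤ) :
    u ∈ AfEven s ↔ u.1.natAbs + u.2.natAbs ≤ s := by
  rw [AfEven, Finset.mem_filter, Finset.mem_product, Finset.mem_Icc, Finset.mem_Icc]
  constructor
  · rintro ⟨-, h⟩; exact h
  · intro h
    refine ⟨⟨⟨?_, ?_⟩, ?_, ?_⟩, h⟩ <;> omega

lemma AfEven_zero (s : ℕ) : ((0 : ℤ), (0 : ℤ)) ∈ AfEven s := by
  rw [mem_AfEven]; simp

lemma AfEven_diam (s : ℕ) : ∀ u ∈ AfEven s, ∀ u' ∈ AfEven s,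
    |u.1 - u'.1| + |u.2 - u'.2| ≤ ((2 * s : ℕ) : ℤ) := by
  intro u hu u' hu'
  rw [mem_AfEven] at hu hu'
  rw [Int.abs_eq_natAbs, Int.abs_eq_natAbs]
  omega

lemma sum_ball (s : ℕ) :
    ∑ bb ∈ Finset.Icc (-(s:ℤ)) s, (2 * ((s:ℤ) - |bb|) + 1).toNat = 2 * s ^ 2 + 2 * s + 1 := by
  induction s with
  | zero => simp
  | succ s ih =>
    have hins : Finset.Icc (-(s+1:ℤ)) (s+1)
        = insert (-(s+1:ℤ)) (insert ((s+1:ℤ)) (Finset.Icc (-(s:ℤ)) s)) := by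
      ext x
      simp only [Finset.mem_Icc, Finset.mem_insert]
      push_cast
      omega
    have hnm1 : (-(s+1:ℤ)) ∉ insert ((s+1:ℤ)) (Finset.Icc (-(s:ℤ)) s) := by
      simp only [Finset.mem_insert, Finset.mem_Icc]
      push_cast
      omega
    have hnm2 : ((s+1:ℤ)) ∉ Finset.Icc (-(s:ℤ)) s := by
      simp only [Finset.mem_Icc]
      push_cast
      omega
    rw [show ((s+1:ℕ):ℤ) = (s:ℤ)+1 by push_cast; ring]
    rw [hins, Finset.sum_insert hnm1, Finset.sum_insert hnm2]
    have hshift : ∑ bb ∈ Finset.Icc (-(s:ℤ)) s, (2 * (((s:ℤ)+1) - |bb|) + 1).toNat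
        = ∑ bb ∈ Finset.Icc (-(s:ℤ)) s, ((2 * ((s:ℤ) - |bb|) + 1).toNat + 2) := by
      refine Finset.sum_congr rfl fun bb hbb => ?_
      rw [Finset.mem_Icc] at hbb
      rw [Int.abs_eq_natAbs]
      omega
    rw [hshift, Finset.sum_add_distrib, ih, Finset.sum_const, Int.card_Icc]
    have h1 : (2 * (((s:ℤ)+1) - |(-(s+1:ℤ))|) + 1).toNat = 1 := by
      rw [abs_neg, abs_of_nonneg (by positivity)]
      omega
    have h2 : (2 * (((s:ℤ)+1) - |((s+1:ℤ))|) + 1).toNat = 1 := by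
      rw [abs_of_nonneg (by positivity)]
      omega
    rw [h1, h2]
    simp only [smul_eq_mul]
    have h3 : ((s:ℤ) + 1 - -(s:ℤ)).toNat = 2 * s + 1 := by omega
    rw [h3]
    ring

lemma card_AfEven (s : ℕ) : (AfEven s).card = 2 * s ^ 2 + 2 * s + 1 := by
  classical
  have hdecomp : AfEven s = (Finset.Icc (-(s:ℤ)) s).biUnion
      (fun bb => ((Finset.Icc (-((s:ℤ) - |bb|)) ((s:ℤ) - |bb|)).image (fun aa => (aa, bb)))) := by
    ext ⟨aa, bb⟩
    rw [mem_AfEven]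
    simp only [Finset.mem_biUnion, Finset.mem_image, Finset.mem_Icc]
    constructor
    · intro h
      refine ⟨bb, ⟨by omega, by omega⟩, aa, ⟨?_, ?_⟩, rfl⟩ <;>
        · rw [Int.abs_eq_natAbs]; omega
    · rintro ⟨bb', hbb', aa', ⟨h1, h2⟩, heq⟩
      obtain ⟨rfl, rfl⟩ : aa' = aa ∧ bb' = bb :=
        ⟨congrArg Prod.fst heq, congrArg Prod.snd heq⟩
      rw [Int.abs_eq_natAbs] at h1 h2
      omega
  rw [hdecomp, Finset.card_biUnion]
  · have : ∀ bb ∈ Finset.Icc (-(s:ℤ)) s,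
        (((Finset.Icc (-((s:ℤ) - |bb|)) ((s:ℤ) - |bb|)).image (fun aa => (aa, bb))).card
          = (2 * ((s:ℤ) - |bb|) + 1).toNat) := by
      intro bb _
      rw [Finset.card_image_of_injective _ (fun x y hxy => congrArg Prod.fst hxy), Int.card_Icc]
      congr 1
      ring
    rw [Finset.sum_congr rfl this]
    exact sum_ball s
  · intro x hx y hy hxy
    simp only [Finset.disjoint_left, Finset.mem_image]
    rintro p ⟨aa, haa, rfl⟩ ⟨aa', haa', hp⟩
    exact hxy (congrArg Prod.snd hp).symm

lemma even_aux (s : ℤ) (hs : 1 ≤ s) (v : ℤ × ℤ)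
    (hv : v.1 = (2*s^2+2*s+1) + (2*s+1) * v.2) (hcon : |v.1| + |v.2| ≤ 2 * s) : False := by
  rcases abs_cases v.2 with ⟨h2a, h2b⟩ | ⟨h2a, h2b⟩
  · -- v.2 ≥ 0 ⇒ v.1 ≥ D > 2s
    have : (0:ℤ) ≤ (2*s+1) * v.2 := mul_nonneg (by linarith) h2b
    have h1 : v.1 > 2 * s := by nlinarith
    have := le_abs_self v.1
    have := abs_nonneg v.2
    linarith
  · -- v.2 < 0
    set c2 : ℤ := -v.2 with hc2
    have hc2pos : 0 < c2 := by omega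
    have hv1 : v.1 = (2*s^2+2*s+1) - (2*s+1) * c2 := by rw [hc2]; linarith [hv]
    rcases abs_cases v.1 with ⟨h1a, h1b⟩ | ⟨h1a, h1b⟩
    · -- v.1 ≥ 0 : then c2 ≥ s+1 and v.1 < 0, contra
      have hA : (2*s^2+2*s+1) - (2*s+1) * c2 + c2 ≤ 2 * s := by
        rw [← hv1]; linarith
      have hB : 2*s^2 + 1 ≤ 2 * s * c2 := by nlinarith
      have hc2s : s + 1 ≤ c2 := by nlinarith
      have : (2*s+1) * c2 ≥ (2*s+1) * (s+1) := by nlinarith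
      nlinarith
    · -- v.1 < 0 (or = 0) : -v.1 = (2s+1)c2 - D
      have hA : -v.1 + c2 ≤ 2 * s := by linarith
      have hB : (2*s+2) * c2 ≤ 2*s^2 + 4*s + 1 := by nlinarith
      have hc2s : c2 ≤ s := by nlinarith
      have : (2*s+1) * c2 ≤ (2*s+1) * s := by nlinarith
      nlinarith

lemma even_min (s : ℤ) (hs : 1 ≤ s) (v : ℤ × ℤ)
    (h2 : (2*s^2+2*s+1) ∣ v.1 - (2*s+1) * v.2) (h0 : v ≠ 0) :
    2 * s < |v.1| + |v.2| := by
  by_contra hcon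
  push_neg at hcon
  obtain ⟨t, ht⟩ := h2
  have hD : (0:ℤ) < 2*s^2+2*s+1 := by nlinarith
  have ht1 : |t| ≤ 1 := by
    by_contra h
    push_neg at h
    have h2t : 2 ≤ |t| := by omega
    have : |v.1 - (2*s+1)*v.2| = (2*s^2+2*s+1) * |t| := by
      rw [ht, abs_mul, abs_of_nonneg hD.le]
    have hb : |v.1 - (2*s+1)*v.2| ≤ |v.1| + (2*s+1) * |v.2| := by
      calc |v.1 - (2*s+1)*v.2| ≤ |v.1| + |(2*s+1)*v.2| := abs_sub _ _
        _ = |v.1| + (2*s+1) * |v.2| := by rw [abs_mul, abs_of_nonneg (by linarith : (0:ℤ) ≤ 2*s+1)]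
    have habs1 := abs_nonneg v.1
    have habs2 := abs_nonneg v.2
    nlinarith
  rw [abs_le] at ht1
  obtain ⟨ht1a, ht1b⟩ := ht1
  interval_cases t
  · -- t = -1 : apply even_aux to -v
    refine even_aux s hs (-v.1, -v.2) ?_ ?_
    · dsimp only
      linarith [ht]
    · dsimp only
      rw [abs_neg, abs_neg]
      exact hcon
  · -- t = 0 : v.1 = (2s+1) v.2
    have hv1 : v.1 = (2*s+1) * v.2 := by linarith [ht]
    rcases eq_or_ne v.2 0 with h20 | h20
    · apply h0
      have hv10 : v.1 = 0 := by rw [hv1, h20, mul_zero]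
      rw [Prod.ext_iff]
      exact ⟨by simpa using hv10, by simpa using h20⟩
    · have h21 : 1 ≤ |v.2| := by
        rcases abs_cases v.2 with ⟨ha, hb⟩ | ⟨ha, hb⟩ <;> omega
      have : |v.1| = (2*s+1) * |v.2| := by
        rw [hv1, abs_mul, abs_of_nonneg (by linarith : (0:ℤ) ≤ 2*s+1)]
      nlinarith
  · -- t = 1
    refine even_aux s hs v ?_ hcon
    linarith [ht]
lemma AfEven_T2 (s : ℕ) (hs : 1 ≤ s) : ∀ u ∈ AfEven s,
    Lpred ((2 * s ^ 2 + 2 * s + 1 : ℕ) : ℤ) 1 (2 * (s:ℤ) + 1) u → u = (0, 0) := by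
  intro u hu hL
  by_contra hne
  rw [mem_AfEven] at hu
  have hcast : ((2 * s ^ 2 + 2 * s + 1 : ℕ) : ℤ) = 2 * (s:ℤ)^2 + 2 * (s:ℤ) + 1 := by push_cast; ring
  have hdvd : (2 * (s:ℤ)^2 + 2 * (s:ℤ) + 1) ∣ u.1 - (2 * (s:ℤ) + 1) * u.2 := by
    rw [← hcast]; exact hL.2
  have := even_min (s:ℤ) (by exact_mod_cast hs) u hdvd (by
    intro h
    apply hne
    rw [h]
    rfl)
  rw [Int.abs_eq_natAbs, Int.abs_eq_natAbs] at this
  omega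

lemma AfEven_cov (s : ℕ) (hs : 1 ≤ s) : ∀ w : ℤ × ℤ, ∃ u ∈ AfEven s,
    Lpred ((2 * s ^ 2 + 2 * s + 1 : ℕ) : ℤ) 1 (2 * (s:ℤ) + 1) (w - u) := by
  classical
  intro w
  set N : ℕ := 2 * s ^ 2 + 2 * s + 1 with hN
  haveI : NeZero N := ⟨by positivity⟩
  have hcast : ((N : ℕ) : ℤ) = 2 * (s:ℤ)^2 + 2 * (s:ℤ) + 1 := by rw [hN]; push_cast; ring
  set φ : ℤ × ℤ → ZMod N := fun v => ((v.1 - (2 * (s:ℤ) + 1) * v.2 : ℤ) : ZMod N) with hφ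
  have hker : ∀ v v' : ℤ × ℤ, φ v = φ v' →
      ((N : ℕ) : ℤ) ∣ (v'.1 - (2 * (s:ℤ) + 1) * v'.2) - (v.1 - (2 * (s:ℤ) + 1) * v.2) := by
    intro v v' h
    rw [hφ] at h
    simp only [ZMod.intCast_eq_intCast_iff] at h
    exact Int.ModEq.dvd h
  have hinj : Set.InjOn φ ↑(AfEven s) := by
    intro u hu u' hu' huu
    by_contra hne
    have hd := hker u u' huu
    have hdvd : (2 * (s:ℤ)^2 + 2 * (s:ℤ) + 1) ∣ (u' - u).1 - (2 * (s:ℤ) + 1) * (u' - u).2 := by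
      rw [← hcast]
      have : (u' - u).1 - (2 * (s:ℤ) + 1) * (u' - u).2
          = (u'.1 - (2 * (s:ℤ) + 1) * u'.2) - (u.1 - (2 * (s:ℤ) + 1) * u.2) := by
        simp only [Prod.fst_sub, Prod.snd_sub]; ring
      rw [this]
      exact hd
    have hne' : u' - u ≠ 0 := sub_ne_zero.mpr (Ne.symm hne)
    have hbig := even_min (s:ℤ) (by exact_mod_cast hs) (u' - u) hdvd hne'
    have hdiam := AfEven_diam s u' (by exact_mod_cast hu') u (by exact_mod_cast hu)
    simp only [Prod.fst_sub, Prod.snd_sub] at hbig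
    push_cast at hdiam
    linarith
  have hcardim : ((AfEven s).image φ).card = Fintype.card (ZMod N) := by
    rw [Finset.card_image_of_injOn hinj, card_AfEven, ZMod.card]
  have himg : (AfEven s).image φ = Finset.univ := Finset.eq_univ_of_card _ hcardim
  have hwmem : φ w ∈ (AfEven s).image φ := by rw [himg]; exact Finset.mem_univ _
  obtain ⟨u, hu, hφu⟩ := Finset.mem_image.mp hwmem
  refine ⟨u, hu, one_dvd _, ?_⟩
  have hd := hker u w hφu
  have : (w - u).1 - (2 * (s:ℤ) + 1) * (w - u).2
      = (w.1 - (2 * (s:ℤ) + 1) * w.2) - (u.1 - (2 * (s:ℤ) + 1) * u.2) := by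
    simp only [Prod.fst_sub, Prod.snd_sub]; ring
  rw [this]
  exact hd
end Even


lemma logb_le_of_le_pow {q N m : ℕ} (hq : 2 ≤ q) (h : N ≤ q ^ m) :
    Real.logb q N ≤ m := by
  have hb : (1:ℝ) < q := by exact_mod_cast hq.trans_lt' one_lt_two
  rcases Nat.eq_zero_or_pos N with rfl | hN
  · simp [Real.logb_zero]
  · have h1 : Real.logb q N ≤ Real.logb q ((q:ℝ) ^ m) := by
      apply Real.logb_le_logb_of_le hb (by exact_mod_cast hN)
      exact_mod_cast h
    rwa [Real.logb_pow, Real.logb_self_eq_one hb, mul_one] at h1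

lemma le_logb_of_pow_le {q N m : ℕ} (hq : 2 ≤ q) (h : q ^ m ≤ N) :
    (m : ℝ) ≤ Real.logb q N := by
  have hb : (1:ℝ) < q := by exact_mod_cast hq.trans_lt' one_lt_two
  have h1 : Real.logb q ((q:ℝ) ^ m) ≤ Real.logb q N := by
    apply Real.logb_le_logb_of_le hb (by positivity)
    exact_mod_cast h
  rwa [Real.logb_pow, Real.logb_self_eq_one hb, mul_one] at h1

lemma logb_nat_nonneg {q : ℕ} (hq : 2 ≤ q) (N : ℕ) : 0 ≤ Real.logb q N := by
  rcases Nat.eq_zero_or_pos N with rfl | hN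
  · simp [Real.logb_zero]
  · exact Real.logb_nonneg (by exact_mod_cast hq.trans_lt' one_lt_two)
      (by exact_mod_cast hN)

lemma tendsto_aux (K₁ K₂ D : ℝ) (hD : 0 < D) :
    Tendsto (fun n : ℕ => (((n:ℝ) - K₁) * ((n:ℝ) - K₂)) / (D * (n:ℝ) ^ 2)) atTop
      (nhds (1 / D)) := by
  have h1 : Tendsto (fun n : ℕ => (1 - K₁ / n) * (1 - K₂ / n) / D) atTop
      (nhds ((1 - 0) * (1 - 0) / D)) := by
    apply Tendsto.div_const
    exact ((tendsto_const_nhds.sub (tendsto_const_div_atTop_nhds_zero_nat K₁)).mul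
      (tendsto_const_nhds.sub (tendsto_const_div_atTop_nhds_zero_nat K₂)))
  have h2 : ((1:ℝ) - 0) * (1 - 0) / D = 1 / D := by ring
  rw [h2] at h1
  apply h1.congr'
  filter_upwards [eventually_ge_atTop 1] with n hn
  have hn0 : (0:ℝ) < (n:ℝ) := by exact_mod_cast hn
  show (1 - K₁ / (n:ℝ)) * (1 - K₂ / n) / D = ((n:ℝ) - K₁) * ((n:ℝ) - K₂) / (D * (n:ℝ) ^ 2)
  rw [div_eq_div_iff (by positivity) (by positivity)]
  field_simp


lemma blockCount_le_total {Q : Type} [Fintype Q] (q : ℕ) (hq : Fintype.card Q = q)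
    (X : Set (ℤ × ℤ → Q)) (n : ℕ) : blockCount2 X n ≤ q ^ (n * n) := by
  classical
  have h1 : blockCount2 X n ≤ Nat.card (Fin n × Fin n → Q) := by
    rw [blockCount2]
    have := Nat.card_mono (Set.toFinite (Set.univ : Set (Fin n × Fin n → Q)))
      (Set.subset_univ ((fun x : ℤ × ℤ → Q =>
        fun p : Fin n × Fin n => x (((p.1 : ℕ) : ℤ), ((p.2 : ℕ) : ℤ))) '' X))
    rwa [Nat.card_univ] at this
  rw [Nat.card_eq_fintype_card, Fintype.card_fun, hq, Fintype.card_prod, Fintype.card_fin] at h1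
  exact h1

lemma rate_nonneg_terms (q : ℕ) (hq : 2 ≤ q) {Q : Type} (X : Set (ℤ × ℤ → Q)) (n : ℕ) :
    0 ≤ Real.logb q (blockCount2 X n) / ((n : ℝ) ^ 2) := by
  apply div_nonneg (logb_nat_nonneg hq _) (by positivity)

lemma rate_le_one_ev (q : ℕ) (hq : 2 ≤ q) {Q : Type} [Fintype Q] (hQ : Fintype.card Q = q)
    (X : Set (ℤ × ℤ → Q)) :
    ∀ᶠ n in atTop, Real.logb q (blockCount2 X n) / ((n : ℝ) ^ 2) ≤ 1 := by
  filter_upwards [eventually_ge_atTop 1] with n hn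
  have h1 : Real.logb q (blockCount2 X n) ≤ (n * n : ℕ) :=
    logb_le_of_le_pow hq (blockCount_le_total q hQ X n)
  have hn0 : (0:ℝ) < (n : ℝ) ^ 2 := by
    have : (1:ℝ) ≤ n := by exact_mod_cast hn
    positivity
  rw [div_le_one hn0]
  calc Real.logb q (blockCount2 X n) ≤ (n * n : ℕ) := h1
    _ = (n : ℝ) ^ 2 := by push_cast; ring

/-- Upper bound: any recoverable system has rate at most `1 - 1/(a*c)`. -/
lemma rate_upper {Q : Type} [Fintype Q] (r q : ℕ) (hr : 1 ≤ r) (hq : 2 ≤ q)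
    (hQ : Fintype.card Q = q)
    (a c b : ℤ) (ha : 0 < a) (hc : 0 < c)
    (hmin : ∀ v : ℤ × ℤ, c ∣ v.2 → a ∣ v.1 - b * v.2 → v ≠ 0 → (r : ℤ) < |v.1| + |v.2|)
    (X : Set (ℤ × ℤ → Q))
    (hX : IsRecoverable2 {v : ℤ × ℤ | v ≠ 0 ∧ |v.1| + |v.2| ≤ (r : ℤ)} X) :
    rate2 q X ≤ 1 - 1 / ((a : ℝ) * (c : ℝ)) := by
  classical
  set D : ℝ := (a : ℝ) * (c : ℝ) with hD
  have hDpos : 0 < D := by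
    rw [hD]; exact mul_pos (by exact_mod_cast ha) (by exact_mod_cast hc)
  set K₁ : ℝ := 2 * r + c with hK₁
  set K₂ : ℝ := 2 * r + a with hK₂
  set g : ℕ → ℝ := fun n => 1 - (((n:ℝ) - K₁) * ((n:ℝ) - K₂)) / (D * (n:ℝ) ^ 2) with hg
  have hgl : Tendsto g atTop (nhds (1 - 1 / D)) :=
    tendsto_const_nhds.sub (tendsto_aux K₁ K₂ D hDpos)
  have hev : ∀ᶠ n in atTop, Real.logb q (blockCount2 X n) / ((n : ℝ) ^ 2) ≤ g n := by
    filter_upwards [eventually_ge_atTop (2 * r + a.toNat + c.toNat)] with n hn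
    have hra : (a.toNat : ℤ) = a := Int.toNat_of_nonneg ha.le
    have hrc : (c.toNat : ℤ) = c := Int.toNat_of_nonneg hc.le
    have hn2r : 2 * r ≤ n := by omega
    have hlen_a : a ≤ ((n : ℤ) - r) - r := by omega
    have hlen_c : c ≤ ((n : ℤ) - r) - r := by omega
    have hnpos : 1 ≤ n := by
      have : 1 ≤ a.toNat := by omega
      omega
    set Scard := (latF a c b r ((n : ℤ) - r)).card with hScard
    -- block count bound
    have hbc := blockCount_le_pow r q hr hQ a c b ha hc hmin X hX n hn2r
    have hlog : Real.logb q (blockCount2 X n) ≤ ((n * n - Scard : ℕ) : ℝ) :=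
      logb_le_of_le_pow hq hbc
    -- S count lower bound (cast to ℝ)
    have hSlow := latF_card_low a c b r ((n : ℤ) - r) ha hc hlen_a hlen_c
    have hSlowR : ((n:ℝ) - K₁) * ((n:ℝ) - K₂) ≤ (Scard : ℝ) * D := by
      have := hSlow
      have hcast : ((((n : ℤ) - r) - r - c) * (((n : ℤ) - r) - r - a) : ℤ)
          ≤ ((Scard : ℤ) * (a * c) : ℤ) := this.le
      calc ((n:ℝ) - K₁) * ((n:ℝ) - K₂)
          = ((((n : ℤ) - r) - r - c : ℤ) : ℝ) * ((((n : ℤ) - r) - r - a : ℤ) : ℝ) := by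
            push_cast [hK₁, hK₂]; ring
        _ = (((((n : ℤ) - r) - r - c) * (((n : ℤ) - r) - r - a) : ℤ) : ℝ) := by push_cast; ring
        _ ≤ (((Scard : ℤ) * (a * c) : ℤ) : ℝ) := by exact_mod_cast hcast
        _ = (Scard : ℝ) * D := by push_cast [hD]; ring
    -- Scard ≤ n * n
    have hSle : Scard ≤ n * n := by
      have h1 : Scard ≤ (((n : ℤ) - r) - r).toNat * (((n : ℤ) - r) - r).toNat := by
        rw [hScard, latF]
        calc (Finset.filter _ _).card ≤ ((Finset.Ico (r:ℤ) ((n:ℤ) - r)) ×ˢ (Finset.Ico (r:ℤ) ((n:ℤ) - r))).card :=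
              Finset.card_filter_le _ _
          _ = (((n : ℤ) - r) - r).toNat * (((n : ℤ) - r) - r).toNat := by
              rw [Finset.card_product, Int.card_Ico]
      have h2 : (((n : ℤ) - r) - r).toNat ≤ n := by omega
      calc Scard ≤ (((n : ℤ) - r) - r).toNat * (((n : ℤ) - r) - r).toNat := h1
        _ ≤ n * n := Nat.mul_le_mul h2 h2
    have hcastm : ((n * n - Scard : ℕ) : ℝ) = (n:ℝ) * (n:ℝ) - (Scard : ℝ) := by
      rw [Nat.cast_sub hSle]; push_cast; ring
    have hn2pos : (0:ℝ) < (n : ℝ) ^ 2 := by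
      have : (1:ℝ) ≤ (n:ℝ) := by exact_mod_cast hnpos
      positivity
    rw [hg]
    have step1 : Real.logb q (blockCount2 X n) / ((n : ℝ) ^ 2)
        ≤ ((n:ℝ) * (n:ℝ) - (Scard : ℝ)) / ((n : ℝ) ^ 2) := by
      rw [div_le_div_iff_of_pos_right hn2pos, ← hcastm]
      exact hlog
    have step2 : ((n:ℝ) * (n:ℝ) - (Scard : ℝ)) / ((n : ℝ) ^ 2)
        ≤ 1 - (((n:ℝ) - K₁) * ((n:ℝ) - K₂)) / (D * (n:ℝ) ^ 2) := by
      rw [div_le_iff₀ hn2pos]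
      have hSge : (Scard : ℝ) ≥ (((n:ℝ) - K₁) * ((n:ℝ) - K₂)) / D := by
        rw [ge_iff_le, div_le_iff₀ hDpos]
        exact hSlowR
      have hexp : (1 - (((n:ℝ) - K₁) * ((n:ℝ) - K₂)) / (D * (n:ℝ) ^ 2)) * ((n:ℝ) ^ 2)
          = (n:ℝ) ^ 2 - (((n:ℝ) - K₁) * ((n:ℝ) - K₂)) / D := by
        field_simp
      rw [hexp]
      have : (n:ℝ) * (n:ℝ) = (n:ℝ) ^ 2 := by ring
      linarith [hSge]
    exact step1.trans step2
  -- limsup estimate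
  rw [rate2]
  have hcb : IsCoboundedUnder (· ≤ ·) atTop
      (fun n : ℕ => Real.logb q (blockCount2 X n) / ((n : ℝ) ^ 2)) := by
    apply isCoboundedUnder_le_of_le (x := 0) atTop
    intro n
    exact rate_nonneg_terms q hq X n
  have hbd : IsBoundedUnder (· ≤ ·) atTop g := hgl.isBoundedUnder_le
  calc Filter.limsup (fun n : ℕ => Real.logb q (blockCount2 X n) / ((n : ℝ) ^ 2)) atTop
      ≤ Filter.limsup g atTop := limsup_le_limsup hev hcb hbd
    _ = 1 - 1 / D := hgl.limsup_eq


/-- Lower bound for the rate of the achievability system. -/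
lemma rate_lower (q r : ℕ) (hq : 2 ≤ q) (a c b : ℤ) (ha : 0 < a) (hc : 0 < c)
    (Af : Finset (ℤ × ℤ)) (h0 : (0, 0) ∈ Af)
    (hT2 : ∀ u ∈ Af, Lpred a c b u → u = (0, 0)) :
    haveI : NeZero q := ⟨by omega⟩
    1 - 1 / ((a : ℝ) * (c : ℝ)) ≤ rate2 q (Xach q a c b Af) := by
  haveI : NeZero q := ⟨by omega⟩
  classical
  set D : ℝ := (a : ℝ) * (c : ℝ) with hD
  have hDpos : 0 < D := by
    rw [hD]; exact mul_pos (by exact_mod_cast ha) (by exact_mod_cast hc)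
  set K₁ : ℝ := -(c : ℝ) with hK₁
  set K₂ : ℝ := -(a : ℝ) with hK₂
  set g : ℕ → ℝ := fun n => 1 - (((n:ℝ) - K₁) * ((n:ℝ) - K₂)) / (D * (n:ℝ) ^ 2) with hg
  have hgl : Tendsto g atTop (nhds (1 - 1 / D)) :=
    tendsto_const_nhds.sub (tendsto_aux K₁ K₂ D hDpos)
  set X := Xach q a c b Af with hXdef
  have hev : ∀ᶠ n in atTop, g n ≤ Real.logb q (blockCount2 X n) / ((n : ℝ) ^ 2) := by
    filter_upwards [eventually_ge_atTop 1] with n hn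
    set Tcard := (Finset.univ.filter
        (fun p : Fin n × Fin n => Lpred a c b (((p.1 : ℕ) : ℤ), ((p.2 : ℕ) : ℤ)))).card with hTdef
    have hbc := blockCount_ge_pow q a c b Af h0 hT2 n
    have hlog : ((n * n - Tcard : ℕ) : ℝ) ≤ Real.logb q (blockCount2 X n) :=
      le_logb_of_pow_le hq hbc
    have hTle : Tcard ≤ n * n := by
      rw [hTdef]
      calc (Finset.filter _ _).card ≤ (Finset.univ : Finset (Fin n × Fin n)).card :=
            Finset.card_filter_le _ _
        _ = n * n := by rw [Finset.card_univ, Fintype.card_prod, Fintype.card_fin]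
    have hThigh := latF_card_high a c b 0 n ha hc (by exact_mod_cast n.zero_le)
    have hTR : (Tcard : ℝ) * D ≤ ((n:ℝ) - K₁) * ((n:ℝ) - K₂) := by
      have heq := Tn_card_eq a c b Af h0 hT2 n
      have hcast : ((Tcard : ℤ) * (a * c) : ℤ) ≤ (((n:ℤ) - 0 + c) * ((n:ℤ) - 0 + a) : ℤ) := by
        rw [hTdef, heq]
        exact hThigh.le
      calc (Tcard : ℝ) * D = (((Tcard : ℤ) * (a * c) : ℤ) : ℝ) := by push_cast [hD]; ring
        _ ≤ ((((n:ℤ) - 0 + c) * ((n:ℤ) - 0 + a) : ℤ) : ℝ) := by exact_mod_cast hcast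
        _ = ((n:ℝ) - K₁) * ((n:ℝ) - K₂) := by push_cast [hK₁, hK₂]; ring
    have hcastm : ((n * n - Tcard : ℕ) : ℝ) = (n:ℝ) * (n:ℝ) - (Tcard : ℝ) := by
      rw [Nat.cast_sub hTle]; push_cast; ring
    have hn2pos : (0:ℝ) < (n : ℝ) ^ 2 := by
      have : (1:ℝ) ≤ (n:ℝ) := by exact_mod_cast hn
      positivity
    rw [hg]
    have step2 : 1 - (((n:ℝ) - K₁) * ((n:ℝ) - K₂)) / (D * (n:ℝ) ^ 2)
        ≤ ((n:ℝ) * (n:ℝ) - (Tcard : ℝ)) / ((n : ℝ) ^ 2) := by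
      rw [le_div_iff₀ hn2pos]
      have hexp : (1 - (((n:ℝ) - K₁) * ((n:ℝ) - K₂)) / (D * (n:ℝ) ^ 2)) * ((n:ℝ) ^ 2)
          = (n:ℝ) ^ 2 - (((n:ℝ) - K₁) * ((n:ℝ) - K₂)) / D := by
        field_simp
      rw [hexp]
      have hTup : (Tcard : ℝ) ≤ (((n:ℝ) - K₁) * ((n:ℝ) - K₂)) / D := by
        rw [le_div_iff₀ hDpos]
        exact hTR
      have : (n:ℝ) * (n:ℝ) = (n:ℝ) ^ 2 := by ring
      linarith
    have step1 : ((n:ℝ) * (n:ℝ) - (Tcard : ℝ)) / ((n : ℝ) ^ 2)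
        ≤ Real.logb q (blockCount2 X n) / ((n : ℝ) ^ 2) := by
      rw [div_le_div_iff_of_pos_right hn2pos, ← hcastm]
      exact hlog
    exact step2.trans step1
  -- limsup estimate
  rw [rate2]
  haveI : Fintype (ZMod q) := ZMod.fintype q
  have hcb : IsCoboundedUnder (· ≤ ·) atTop g := by
    apply isCoboundedUnder_le_of_eventually_le (x := 1 - 1/D - 1) atTop
    apply hgl.eventually
    apply eventually_ge_nhds
    linarith
  have hbd : IsBoundedUnder (· ≤ ·) atTop
      (fun n : ℕ => Real.logb q (blockCount2 X n) / ((n : ℝ) ^ 2)) :=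
    isBoundedUnder_of_eventually_le (rate_le_one_ev q hq (ZMod.card q) X)
  calc (1:ℝ) - 1 / D = Filter.limsup g atTop := hgl.limsup_eq.symm
    _ ≤ _ := limsup_le_limsup hev hcb hbd



/-- For the `l₁`-ball recovery set of radius `r`, the supremum of rates of
recoverable systems on `ℤ²` over alphabets of size `q` is `1 − 1/D₁(r)`. -/
theorem stmt14 (r : ℕ) (hr : 1 ≤ r) (q : ℕ) (hq : 2 ≤ q) :
    sSup {x : ℝ | ∃ (Q : Type) (_ : Fintype Q), Fintype.card Q = q ∧
        ∃ X : Set (ℤ × ℤ → Q),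
          IsRecoverable2 {v : ℤ × ℤ | v ≠ 0 ∧ |v.1| + |v.2| ≤ (r : ℤ)} X ∧
          rate2 q X = x} =
      1 - 1 / D1 r := by
  haveI : NeZero q := ⟨by omega⟩
  classical
  set T := {x : ℝ | ∃ (Q : Type) (_ : Fintype Q), Fintype.card Q = q ∧
        ∃ X : Set (ℤ × ℤ → Q),
          IsRecoverable2 {v : ℤ × ℤ | v ≠ 0 ∧ |v.1| + |v.2| ≤ (r : ℤ)} X ∧
          rate2 q X = x} with hT
  -- produce the data (a, c, b, Af, proofs) uniformly in both parity cases
  obtain ⟨a, c, b, Af, ha, hc, hD1, hmin, h0, hdiam, hT2, hcov⟩ :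
      ∃ (a c b : ℤ) (Af : Finset (ℤ × ℤ)), 0 < a ∧ 0 < c ∧
        D1 r = (a : ℝ) * (c : ℝ) ∧
        (∀ v : ℤ × ℤ, c ∣ v.2 → a ∣ v.1 - b * v.2 → v ≠ 0 → (r : ℤ) < |v.1| + |v.2|) ∧
        ((0, 0) ∈ Af) ∧
        (∀ u ∈ Af, ∀ u' ∈ Af, |u.1 - u'.1| + |u.2 - u'.2| ≤ (r : ℤ)) ∧
        (∀ u ∈ Af, Lpred a c b u → u = (0, 0)) ∧
        (∀ w : ℤ × ℤ, ∃ u ∈ Af, Lpred a c b (w - u)) := by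
    rcases Nat.even_or_odd r with hre | hro
    · -- even case
      obtain ⟨s, hs⟩ := hre
      have hs2 : 2 * s = r := by omega
      have hs1 : 1 ≤ s := by omega
      have hrmod : r % 2 = 0 := by omega
      refine ⟨((2 * s ^ 2 + 2 * s + 1 : ℕ) : ℤ), 1, 2 * (s:ℤ) + 1, AfEven s,
        by positivity, one_pos, ?_, ?_, AfEven_zero s, ?_, AfEven_T2 s hs1, AfEven_cov s hs1⟩
      · rw [D1, if_neg (by omega)]
        have : (r : ℝ) = 2 * s := by exact_mod_cast hs2.symm
        rw [this]
        push_cast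
        ring
      · intro v h1 h2 h0
        have hsz : (1:ℤ) ≤ (s:ℤ) := by exact_mod_cast hs1
        have hd : (2*(s:ℤ)^2+2*(s:ℤ)+1) ∣ v.1 - (2*(s:ℤ)+1) * v.2 := by
          have hcast : ((2 * s ^ 2 + 2 * s + 1 : ℕ) : ℤ) = 2*(s:ℤ)^2+2*(s:ℤ)+1 := by
            push_cast; ring
          rwa [hcast] at h2
        have := even_min (s:ℤ) hsz v hd h0
        have hrs : (r : ℤ) = 2 * (s:ℤ) := by exact_mod_cast hs2.symm
        rw [hrs]
        exact this
      · intro u hu u' hu'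
        have := AfEven_diam s u hu u' hu'
        have hrs : ((2 * s : ℕ) : ℤ) = (r : ℤ) := by exact_mod_cast hs2
        rwa [hrs] at this
    · -- odd case
      obtain ⟨m, hm⟩ := hro
      set kn : ℕ := m + 1 with hkn
      have hk2 : 2 * kn = r + 1 := by omega
      have hk1 : 1 ≤ kn := by omega
      set k : ℤ := (kn : ℤ) with hkz
      have hkk : (1:ℤ) ≤ k := by rw [hkz]; exact_mod_cast hk1
      have hr2k : (r : ℤ) = 2 * k - 1 := by rw [hkz]; exact_mod_cast (by omega : (r:ℤ) = 2 * (kn:ℤ) - 1)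
      refine ⟨2 * k, k, 1, AfOdd k, by omega, by omega, ?_, ?_, AfOdd_zero k hkk, ?_,
        AfOdd_T2 k hkk, AfOdd_cov k hkk⟩
      · rw [D1, if_pos (by omega)]
        have : (r : ℝ) = 2 * (kn : ℝ) - 1 := by exact_mod_cast hr2k
        rw [this, hkz]
        push_cast
        ring
      · intro v h1 h2 h0
        rw [hr2k]
        exact odd_min k hkk v h1 h2 h0
      · intro u hu u' hu'
        rw [hr2k]
        exact AfOdd_diam k hkk u hu u' hu'
  -- upper bound for every element of T
  have hub : ∀ x ∈ T, x ≤ 1 - 1 / D1 r := by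
    rintro x ⟨Q, hQfin, hQcard, X, hXrec, rfl⟩
    rw [hD1]
    exact @rate_upper Q hQfin r q hr hq hQcard a c b ha hc hmin X hXrec
  -- membership of the bound
  have hmem : (1 - 1 / D1 r) ∈ T := by
    refine ⟨ZMod q, ZMod.fintype q, ZMod.card q, Xach q a c b Af,
      Xach_recoverable q r a c b Af h0 hdiam hT2 hcov, ?_⟩
    apply le_antisymm
    · rw [hD1]
      exact rate_upper r q hr hq (ZMod.card q) a c b ha hc hmin _
        (Xach_recoverable q r a c b Af h0 hdiam hT2 hcov)
    · rw [hD1]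
      exact rate_lower q r hq a c b ha hc Af h0 hT2
  exact le_antisymm (csSup_le ⟨_, hmem⟩ hub) (le_csSup ⟨_, hub⟩ hmem)
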